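/- Let a, b ∈ (0,1/2), and set J = J(a,b) and K = J(b,a), where J(a,b) = (1/24){(2ab − a − b)(b − a + 1) + a(b − 1) + 3}. Put c_J = 3(8J − 1) and c_K = 3(8K − 1). Then b is a root of the quadratic equation 3(2c_J + 2c_K + 3)b² + 3(−5c_J + c_K − 3)b + 3c_J − 6c_K − (c_J + c_K)² = 0, and a = (3b + c_J + c_K)/(6b − 3). -/

import Mathlib

/-- Inversion of the moment equations in the natural model: with `J = J(a,b)`,
`K = J(b,a)`, `c_J = 3(8J - 1)` and `c_K = 3(8K - 1)`, the parameter `b` solves the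
quadratic equation
`3(2c_J + 2c_K + 3)b² + 3(-5c_J + c_K - 3)b + 3c_J - 6c_K - (c_J + c_K)² = 0`,
and `a = (3b + c_J + c_K)/(6b - 3)`. -/
theorem stmt_17 (J : ℝ → ℝ → ℝ)
    (hJ : ∀ a b, J a b = (1/24) * ((2*a*b - a - b) * (b - a + 1) + a * (b - 1) + 3))
    (a b : ℝ) (ha : a ∈ Set.Ioo (0:ℝ) (1/2)) (hb : b ∈ Set.Ioo (0:ℝ) (1/2))
    (cJ cK : ℝ) (hcJ : cJ = 3 * (8 * J a b - 1)) (hcK : cK = 3 * (8 * J b a - 1)) :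
    3 * (2*cJ + 2*cK + 3) * b^2 + 3 * (-5*cJ + cK - 3) * b +
        3*cJ - 6*cK - (cJ + cK)^2 = 0 ∧
    a = (3*b + cJ + cK) / (6*b - 3) := by
  have hne : 6*b - 3 ≠ 0 := by
    have := hb.2
    intro h
    nlinarith
  subst hcJ hcK
  rw [hJ, hJ]
  constructor
  · ring
  · rw [eq_div_iff hne]
    ring
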